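/- Let X be a real Hilbert space, let ρ > −1, and let A : X ⇉ X be ρ-comonotone. Then the resolvent J_A = (Id + A)⁻¹ is at most single-valued: if u ∈ J_A x and v ∈ J_A x then u = v. Consequently J_{A⁻¹} = Id − J_A is also at most single-valued. -/
import Mathlib


open RealInnerProductSpace

variable {X : Type*} [NormedAddCommGroup X] [InnerProductSpace ℝ X] [CompleteSpace X]

/-- `A` is `ρ`-comonotone. -/
def Comonotone (ρ : ℝ) (A : X → Set X) : Prop :=
  ∀ ⦃x u y v : X⦄, u ∈ A x → v ∈ A y → ρ * ‖u - v‖ ^ 2 ≤ ⟪x - y, u - v⟫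

/-- The resOp `J_A = (Id + A)⁻¹` of `A`: `u ∈ J_A x ↔ x - u ∈ A u`. -/
def resOp (A : X → Set X) : X → Set X := fun x => {u | x - u ∈ A u}

theorem stmt3 (A : X → Set X) (ρ : ℝ) (hρ : -1 < ρ) (hA : Comonotone ρ A) :
    (∀ x u v : X, u ∈ resOp A x → v ∈ resOp A x → u = v) ∧
    (∀ x u v : X, (∃ w ∈ resOp A x, u = x - w) → (∃ w ∈ resOp A x, v = x - w) →
      u = v) := by
  have key : ∀ x u v : X, u ∈ resOp A x → v ∈ resOp A x → u = v := by
    intro x u v hu hv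
    have h := hA hu hv
    have h1 : (x - u) - (x - v) = -(u - v) := by abel
    rw [h1, norm_neg, inner_neg_right, real_inner_self_eq_norm_sq] at h
    have hn : ‖u - v‖ ^ 2 ≤ 0 := by nlinarith [sq_nonneg ‖u - v‖]
    have : u - v = 0 := by
      have := sq_nonneg ‖u - v‖
      have h0 : ‖u - v‖ = 0 := by nlinarith [norm_nonneg (u - v)]
      exact norm_eq_zero.mp h0
    exact sub_eq_zero.mp this
  refine ⟨key, ?_⟩
  rintro x u v ⟨w, hw, rfl⟩ ⟨w', hw', rfl⟩
  rw [key x w w' hw hw']
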